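/- In the discrete-time voter model on a finite connected graph G, for any initial distribution μ on colorings, the geometric decay rate λ_V(G,μ) = lim_{t→∞} P_μ(τ > t)^{1/t} of the consensus time satisfies λ_V(G,μ) ≤ λ_CRW(G), where λ_CRW(G) is the geometric decay rate of the coalescence time of the system of coalescing lazy random walks on G. Equality holds if with positive probability all initial opinions are distinct. -/

import Mathlib

open Filter Topology Matrix

variable {V : Type*} [Fintype V] [DecidableEq V]

/-- One-step transition probability of the discrete-time voter model on a finite graph `G`. -/
noncomputable def voterStep (G : SimpleGraph V) [DecidableRel G.Adj]
    (η η' : V → ℕ) : ℝ :=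
  (1 / (Fintype.card V : ℝ)) * ∑ v : V, ∑ u ∈ G.neighborFinset v,
    ((if η' v = η u then (1 : ℝ) else 0) / (G.degree v : ℝ)) *
      ∏ w ∈ Finset.univ.erase v, (if η' w = η w then (1 : ℝ) else 0)

/-- `t`-step transition probability of the voter model. -/
noncomputable def voterProb (G : SimpleGraph V) [DecidableRel G.Adj] :
    ℕ → (V → ℕ) → (V → ℕ) → ℝ
  | 0, η, η' => if η = η' then 1 else 0
  | t + 1, η, η'' => ∑' η' : V → ℕ, voterStep G η η' * voterProb G t η' η''

/-- `P_η(τ > t)`: probability that the voter model from `η` has no consensus by time `t`. -/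
noncomputable def voterSurvival (G : SimpleGraph V) [DecidableRel G.Adj]
    (t : ℕ) (η : V → ℕ) : ℝ :=
  ∑' η' : V → ℕ, if ∀ v w : V, η' v = η' w then 0 else voterProb G t η η'

/-- Transition matrix of the dual system of coalescing lazy random walks on `G`: a state is
a map `f : V → V` recording the position of the walker started at each vertex; a uniform
vertex `v` and uniform neighbor `u` are chosen and all walkers at `v` move to `u`. -/
noncomputable def crwMatrix (G : SimpleGraph V) [DecidableRel G.Adj] :
    Matrix (V → V) (V → V) ℝ := fun f g =>
  (1 / (Fintype.card V : ℝ)) * ∑ v : V, ∑ u ∈ G.neighborFinset v,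
    (1 / (G.degree v : ℝ)) *
      (if g = (fun w => if f w = v then u else f w) then 1 else 0)

/-- `P(σ > n)`: probability that the coalescing random walks started from one walker at
each vertex have not fully coalesced by time `n`. -/
noncomputable def crwSurvival (G : SimpleGraph V) [DecidableRel G.Adj] (n : ℕ) : ℝ :=
  ∑ g : V → V, if ∀ v w : V, g v = g w then 0 else ((crwMatrix G) ^ n) id g

section Aux

variable (G : SimpleGraph V) [DecidableRel G.Adj]

lemma crwMatrix_nonneg (f g : V → V) : 0 ≤ crwMatrix G f g := by
  unfold crwMatrix; positivity

lemma crwPow_nonneg (n : ℕ) (f g : V → V) : 0 ≤ ((crwMatrix G) ^ n) f g := by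
  induction n generalizing f g with
  | zero => simp only [pow_zero, Matrix.one_apply]; positivity
  | succ n ih =>
    rw [pow_succ, Matrix.mul_apply]
    exact Finset.sum_nonneg fun k _ => mul_nonneg (ih f k) (crwMatrix_nonneg G k g)

lemma voterStep_nonneg (η η' : V → ℕ) : 0 ≤ voterStep G η η' := by
  unfold voterStep; positivity

lemma voterProb_nonneg (t : ℕ) (η η' : V → ℕ) : 0 ≤ voterProb G t η η' := by
  induction t generalizing η with
  | zero => simp only [voterProb]; positivity
  | succ t ih =>
    simp only [voterProb]
    exact tsum_nonneg fun ξ => mul_nonneg (voterStep_nonneg G η ξ) (ih ξ)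

lemma voterStep_eq (η η' : V → ℕ) :
    voterStep G η η' = (1 / (Fintype.card V : ℝ)) * ∑ v : V, ∑ u ∈ G.neighborFinset v,
      (1 / (G.degree v : ℝ)) *
        (if η' = (fun w => if w = v then η u else η w) then 1 else 0) := by
  unfold voterStep
  congr 1
  refine Finset.sum_congr rfl fun v _ => Finset.sum_congr rfl fun u hu => ?_
  by_cases h : η' = fun w => if w = v then η u else η w
  · have h1 : η' v = η u := by rw [h]; simp
    have h2 : ∀ w ∈ Finset.univ.erase v, (if η' w = η w then (1:ℝ) else 0) = 1 := by
      intro w hw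
      have hwv : w ≠ v := Finset.ne_of_mem_erase hw
      rw [h]; simp [hwv]
    rw [Finset.prod_eq_one h2, if_pos h1, if_pos h, mul_one]
  · rw [if_neg h, mul_zero]
    obtain ⟨w, hw⟩ := Function.ne_iff.mp h
    by_cases hwv : w = v
    · subst hwv
      have hw2 : η' w ≠ η u := by simpa using hw
      rw [if_neg hw2, zero_div, zero_mul]
    · have hw' : η' w ≠ η w := by simpa [hwv] using hw
      rw [Finset.prod_eq_zero (Finset.mem_erase.mpr ⟨hwv, Finset.mem_univ w⟩)
        (show (if η' w = η w then (1:ℝ) else 0) = 0 from if_neg hw'), mul_zero]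

lemma voterProb_succ (t : ℕ) (η η'' : V → ℕ) :
    voterProb G (t + 1) η η'' = (1 / (Fintype.card V : ℝ)) * ∑ v : V,
      ∑ u ∈ G.neighborFinset v, (1 / (G.degree v : ℝ)) *
        voterProb G t (fun w => if w = v then η u else η w) η'' := by
  have Sbase : ∀ v u : V, Summable (fun η' : V → ℕ => (1 / (G.degree v : ℝ)) *
      ((if η' = (fun w => if w = v then η u else η w) then (1:ℝ) else 0) *
        voterProb G t η' η'')) := by
    intro v u
    apply summable_of_ne_finset_zero (s := {fun w => if w = v then η u else η w})
    intro b hb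
    simp only [Finset.mem_singleton] at hb
    simp [hb]
  have expand : ∀ η' : V → ℕ, voterStep G η η' * voterProb G t η' η'' =
      (1 / (Fintype.card V : ℝ)) * ∑ v : V, ∑ u ∈ G.neighborFinset v,
        (1 / (G.degree v : ℝ)) *
          ((if η' = (fun w => if w = v then η u else η w) then (1:ℝ) else 0) *
            voterProb G t η' η'') := by
    intro η'
    rw [voterStep_eq]
    simp only [Finset.sum_mul, mul_assoc]
  show (∑' η' : V → ℕ, voterStep G η η' * voterProb G t η' η'') = _
  rw [tsum_congr expand, tsum_mul_left,
    Summable.tsum_finsetSum (fun v _ => (hasSum_sum fun u _ => (Sbase v u).hasSum).summable)]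
  congr 1
  refine Finset.sum_congr rfl fun v _ => ?_
  rw [Summable.tsum_finsetSum (fun u _ => Sbase v u)]
  refine Finset.sum_congr rfl fun u _ => ?_
  rw [tsum_mul_left]
  congr 1
  rw [tsum_eq_single (fun w => if w = v then η u else η w)]
  · rw [if_pos rfl, one_mul]
  · intro b hb
    rw [if_neg hb, zero_mul]

lemma voterProb_dual (t : ℕ) (η η'' : V → ℕ) :
    voterProb G t η η'' = ∑ g : V → V, ((crwMatrix G) ^ t) id g *
      (if η'' = (fun w => η (g w)) then 1 else 0) := by
  induction t generalizing η with
  | zero =>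
    simp only [pow_zero, Matrix.one_apply, voterProb]
    rw [Finset.sum_eq_single (id : V → V)]
    · have hiff : (η'' = fun w => η (id w)) ↔ η = η'' := by
        constructor
        · intro hh; funext w; exact (congrFun hh w).symm
        · intro hh; funext w; rw [hh]; rfl
      rw [if_pos rfl, one_mul]
      by_cases h : η = η''
      · rw [if_pos h, if_pos (hiff.mpr h)]
      · rw [if_neg h, if_neg (fun hh => h (hiff.mp hh))]
    · intro g _ hg
      rw [if_neg (Ne.symm hg), zero_mul]
    · intro h; exact absurd (Finset.mem_univ id) h
  | succ t ih =>
    rw [voterProb_succ]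
    have hstep : ∀ k : V → V,
        (∑ g : V → V, crwMatrix G k g * (if η'' = (fun w => η (g w)) then (1:ℝ) else 0)) =
        (1 / (Fintype.card V : ℝ)) * ∑ v : V, ∑ u ∈ G.neighborFinset v,
          (1 / (G.degree v : ℝ)) *
            (if η'' = (fun w => if k w = v then η u else η (k w)) then (1:ℝ) else 0) := by
      intro k
      unfold crwMatrix
      simp only [Finset.sum_mul, Finset.mul_sum, mul_assoc]
      rw [Finset.sum_comm]
      refine Finset.sum_congr rfl fun v _ => ?_
      rw [Finset.sum_comm]
      refine Finset.sum_congr rfl fun u _ => ?_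
      rw [Finset.sum_eq_single (fun w => if k w = v then u else k w)]
      · simp [apply_ite η]
      · intro g _ hg
        rw [if_neg hg]
        simp
      · intro h; exact absurd (Finset.mem_univ _) h
    have ihrw : ∀ v u : V, voterProb G t (fun w => if w = v then η u else η w) η''
        = ∑ k : V → V, ((crwMatrix G) ^ t) id k *
            (if η'' = (fun w => if k w = v then η u else η (k w)) then (1:ℝ) else 0) := by
      intro v u
      rw [ih]
    have RHS : (∑ g : V → V, ((crwMatrix G) ^ (t + 1)) id g *
          (if η'' = (fun w => η (g w)) then (1:ℝ) else 0))
        = ∑ k : V → V, ((crwMatrix G) ^ t) id k *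
            ((1 / (Fintype.card V : ℝ)) * ∑ v : V, ∑ u ∈ G.neighborFinset v,
              (1 / (G.degree v : ℝ)) *
                (if η'' = (fun w => if k w = v then η u else η (k w)) then (1:ℝ) else 0)) := by
      simp only [pow_succ, Matrix.mul_apply, Finset.sum_mul]
      rw [Finset.sum_comm]
      refine Finset.sum_congr rfl fun k _ => ?_
      rw [← hstep k, Finset.mul_sum]
      exact Finset.sum_congr rfl fun g _ => by ring
    rw [RHS]
    simp only [ihrw, Finset.mul_sum]
    refine Eq.trans (Finset.sum_congr rfl fun v _ => Finset.sum_comm) ?_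
    rw [Finset.sum_comm]
    refine Finset.sum_congr rfl fun k _ => Finset.sum_congr rfl fun v _ =>
      Finset.sum_congr rfl fun u _ => by ring

lemma voterSurvival_dual (t : ℕ) (η : V → ℕ) :
    voterSurvival G t η = ∑ g : V → V, ((crwMatrix G) ^ t) id g *
      (if ∀ v w : V, η (g v) = η (g w) then 0 else 1) := by
  unfold voterSurvival
  have Ssum : ∀ g : V → V, Summable (fun η' : V → ℕ => ((crwMatrix G) ^ t) id g *
      (if η' = (fun w => η (g w)) then (if ∀ v w : V, η' v = η' w then (0:ℝ) else 1) else 0)) := by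
    intro g
    apply summable_of_ne_finset_zero (s := {fun w => η (g w)})
    intro b hb
    simp only [Finset.mem_singleton] at hb
    simp [hb]
  have expand : ∀ η' : V → ℕ, (if ∀ v w : V, η' v = η' w then (0:ℝ) else voterProb G t η η')
      = ∑ g : V → V, ((crwMatrix G) ^ t) id g *
          (if η' = (fun w => η (g w)) then (if ∀ v w : V, η' v = η' w then (0:ℝ) else 1) else 0) := by
    intro η'
    by_cases h : ∀ v w : V, η' v = η' w
    · rw [if_pos h]
      symm
      refine Finset.sum_eq_zero fun g _ => ?_
      rw [if_pos h]
      simp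
    · rw [if_neg h, voterProb_dual]
      refine Finset.sum_congr rfl fun g _ => ?_
      by_cases hg : η' = fun w => η (g w)
      · rw [if_pos hg, if_pos hg, if_neg h]
      · rw [if_neg hg, if_neg hg]
  rw [tsum_congr expand, Summable.tsum_finsetSum (fun g _ => Ssum g)]
  refine Finset.sum_congr rfl fun g _ => ?_
  rw [tsum_eq_single (fun w => η (g w))]
  · rw [if_pos rfl]
  · intro b hb
    rw [if_neg hb, mul_zero]

lemma voterSurvival_nonneg (t : ℕ) (η : V → ℕ) : 0 ≤ voterSurvival G t η := by
  refine tsum_nonneg fun η' => ?_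
  by_cases h : ∀ v w : V, η' v = η' w
  · rw [if_pos h]
  · simp only [if_neg h]
    exact voterProb_nonneg G t η η'

lemma crwSurvival_nonneg (n : ℕ) : 0 ≤ crwSurvival G n := by
  refine Finset.sum_nonneg fun g _ => ?_
  by_cases h : ∀ v w : V, g v = g w
  · rw [if_pos h]
  · simp only [if_neg h]
    exact crwPow_nonneg G n id g

lemma voterSurvival_le (t : ℕ) (η : V → ℕ) : voterSurvival G t η ≤ crwSurvival G t := by
  rw [voterSurvival_dual]
  unfold crwSurvival
  refine Finset.sum_le_sum fun g _ => ?_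
  by_cases hg : ∀ v w : V, g v = g w
  · have h' : ∀ v w : V, η (g v) = η (g w) := fun v w => by rw [hg v w]
    rw [if_pos h', if_pos hg, mul_zero]
  · rw [if_neg hg]
    by_cases hg' : ∀ v w : V, η (g v) = η (g w)
    · rw [if_pos hg', mul_zero]
      exact crwPow_nonneg G t id g
    · rw [if_neg hg', mul_one]

lemma voterSurvival_eq (t : ℕ) (η : V → ℕ) (hη : Function.Injective η) :
    voterSurvival G t η = crwSurvival G t := by
  rw [voterSurvival_dual]
  unfold crwSurvival
  refine Finset.sum_congr rfl fun g _ => ?_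
  by_cases hg : ∀ v w : V, g v = g w
  · have h' : ∀ v w : V, η (g v) = η (g w) := fun v w => by rw [hg v w]
    rw [if_pos h', if_pos hg, mul_zero]
  · rw [if_neg hg, if_neg (fun h => hg fun v w => hη (h v w)), mul_one]

end Aux

/-- The geometric decay rate of the consensus time of the voter model from any initial
distribution `μ` on colorings is at most the decay rate of the coalescence time of the
dual coalescing random walks, with equality if with positive probability all initial
opinions are distinct. -/
theorem voter_rate_le_crw_rate (G : SimpleGraph V) [DecidableRel G.Adj]
    (hG : G.Connected) (hcard : 2 ≤ Fintype.card V)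
    (μ : (V → ℕ) → ℝ) (hμ0 : ∀ η, 0 ≤ μ η) (hμ1 : ∑' η : V → ℕ, μ η = 1)
    (lamV lamCRW : ℝ)
    (hV : Tendsto (fun t : ℕ =>
        (∑' η : V → ℕ, μ η * voterSurvival G t η) ^ ((1 : ℝ) / t)) atTop (𝓝 lamV))
    (hC : Tendsto (fun n : ℕ => crwSurvival G n ^ ((1 : ℝ) / n)) atTop (𝓝 lamCRW)) :
    lamV ≤ lamCRW ∧
    ((∃ η : V → ℕ, 0 < μ η ∧ Function.Injective η) → lamV = lamCRW) := by
  have hμsum : Summable μ := by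
    by_contra h
    rw [tsum_eq_zero_of_not_summable h] at hμ1
    norm_num at hμ1
  have hSsum : ∀ t : ℕ, Summable (fun η : V → ℕ => μ η * voterSurvival G t η) := by
    intro t
    refine Summable.of_nonneg_of_le
      (fun η => mul_nonneg (hμ0 η) (voterSurvival_nonneg G t η))
      (fun η => mul_le_mul_of_nonneg_left (voterSurvival_le G t η) (hμ0 η))
      (hμsum.mul_right (crwSurvival G t))
  have hS_nonneg : ∀ t : ℕ, 0 ≤ ∑' η : V → ℕ, μ η * voterSurvival G t η := fun t =>
    tsum_nonneg fun η => mul_nonneg (hμ0 η) (voterSurvival_nonneg G t η)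
  have hS_le : ∀ t : ℕ, (∑' η : V → ℕ, μ η * voterSurvival G t η) ≤ crwSurvival G t := by
    intro t
    calc (∑' η : V → ℕ, μ η * voterSurvival G t η)
        ≤ ∑' η : V → ℕ, μ η * crwSurvival G t :=
          Summable.tsum_le_tsum (fun η => mul_le_mul_of_nonneg_left (voterSurvival_le G t η) (hμ0 η))
            (hSsum t) (hμsum.mul_right _)
      _ = crwSurvival G t := by rw [tsum_mul_right, hμ1, one_mul]
  have h1 : lamV ≤ lamCRW := by
    refine le_of_tendsto_of_tendsto' hV hC fun t => ?_
    exact Real.rpow_le_rpow (hS_nonneg t) (hS_le t) (by positivity)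
  refine ⟨h1, ?_⟩
  rintro ⟨η₀, hpos, hinj⟩
  refine le_antisymm h1 ?_
  have hlow : ∀ t : ℕ, μ η₀ * crwSurvival G t ≤ ∑' η : V → ℕ, μ η * voterSurvival G t η := by
    intro t
    rw [← voterSurvival_eq G t η₀ hinj]
    exact Summable.le_tsum (hSsum t) η₀
      (fun b _ => mul_nonneg (hμ0 b) (voterSurvival_nonneg G t b))
  have hmono : ∀ t : ℕ, (μ η₀ * crwSurvival G t) ^ ((1:ℝ)/t)
      ≤ (∑' η : V → ℕ, μ η * voterSurvival G t η) ^ ((1:ℝ)/t) := by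
    intro t
    refine Real.rpow_le_rpow (mul_nonneg hpos.le (crwSurvival_nonneg G t)) (hlow t)
      (by positivity)
  have htend : Tendsto (fun t : ℕ => (μ η₀ * crwSurvival G t) ^ ((1:ℝ)/t)) atTop (𝓝 lamCRW) := by
    have heq : ∀ t : ℕ, (μ η₀ * crwSurvival G t) ^ ((1:ℝ)/t)
        = μ η₀ ^ ((1:ℝ)/t) * crwSurvival G t ^ ((1:ℝ)/t) := fun t =>
      Real.mul_rpow hpos.le (crwSurvival_nonneg G t)
    have hc : Tendsto (fun t : ℕ => μ η₀ ^ ((1:ℝ)/t)) atTop (𝓝 1) := by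
      have h0 : Tendsto (fun t : ℕ => (1:ℝ)/t) atTop (𝓝 0) :=
        tendsto_one_div_atTop_nhds_zero_nat
      have hcont : ContinuousAt (fun x : ℝ => μ η₀ ^ x) 0 :=
        Real.continuousAt_const_rpow (ne_of_gt hpos)
      have := (hcont.tendsto).comp h0
      simpa [Function.comp_def] using this
    have := hc.mul hC
    rw [one_mul] at this
    exact Tendsto.congr (fun t => (heq t).symm) this
  exact le_of_tendsto_of_tendsto' htend hV hmono
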